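/- arXiv:2209.03474 — 3 statements merged into one kernel-verified Lean document; each statement's English description precedes it below -/
import Mathlib

section
/- For all v with 0 < v ≤ v* (any v* > 0 at which the small-v series is valid), the ratio lk(v)/f_Ṽ(v), where lk(v) = v^{−5/2}√(2π) ∑_{j≥1} ((2j−1)²π² − v) exp(−(2j−1)²π²/(2v)) and f_Ṽ is the InverseGamma(α, π²/2) density, is bounded above by δ1(v) = (√(2π⁵) Γ(α) / (π²/2)^α) · v^{α−3/2}. -/
open Real

/-- The `InverseGamma(α, γ)` density. -/
noncomputable def invGammaDensity (α γ v : ℝ) : ℝ :=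
  if 0 < v then γ ^ α * v ^ (-α - 1) * Real.exp (-γ / v) / Real.Gamma α else 0

noncomputable def thN (t : ℝ) : ℝ := ∑' n : ℕ, Real.exp (-t * ((n : ℝ) + 1) ^ 2)
noncomputable def thZ (t : ℝ) : ℝ := ∑' n : ℤ, Real.exp (-t * (n : ℝ) ^ 2)
noncomputable def thQ (t : ℝ) : ℝ := ∑' j : ℕ, Real.exp (-t * (2 * (j : ℝ) + 1) ^ 2)
noncomputable def thP (t : ℝ) : ℝ :=
  ∑' j : ℕ, (2 * (j : ℝ) + 1) ^ 2 * Real.exp (-t * (2 * (j : ℝ) + 1) ^ 2)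

lemma nat_le_sq (n : ℕ) : (n : ℝ) ≤ (n : ℝ) ^ 2 := by
  have : n ≤ n ^ 2 := Nat.le_self_pow (by norm_num) n
  exact_mod_cast this

lemma summable_thN {t : ℝ} (ht : 0 < t) :
    Summable (fun n : ℕ ↦ Real.exp (-t * ((n : ℝ) + 1) ^ 2)) := by
  have hr : Real.exp (-t) < 1 := Real.exp_lt_one_iff.2 (by linarith)
  refine Summable.of_nonneg_of_le (fun n ↦ (Real.exp_pos _).le)
    (fun n ↦ ?_) ((summable_geometric_of_lt_one (Real.exp_pos _).le hr).mul_left (Real.exp (-t)))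
  rw [← Real.exp_nat_mul, ← Real.exp_add]
  apply Real.exp_le_exp.2
  nlinarith [Nat.cast_nonneg (α := ℝ) n, nat_le_sq n]

lemma summable_thQ {t : ℝ} (ht : 0 < t) :
    Summable (fun j : ℕ ↦ Real.exp (-t * (2 * (j : ℝ) + 1) ^ 2)) := by
  have hr : Real.exp (-8 * t) < 1 := Real.exp_lt_one_iff.2 (by linarith)
  refine Summable.of_nonneg_of_le (fun n ↦ (Real.exp_pos _).le)
    (fun n ↦ ?_) ((summable_geometric_of_lt_one (Real.exp_pos _).le hr).mul_left (Real.exp (-t)))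
  rw [← Real.exp_nat_mul, ← Real.exp_add]
  apply Real.exp_le_exp.2
  nlinarith [Nat.cast_nonneg (α := ℝ) n, nat_le_sq n]

lemma poly_exp_le {t x : ℝ} (ht : 0 < t) (hx : 0 < x) :
    x ^ 2 * Real.exp (-t * x ^ 2) ≤ 2 / t * Real.exp (-(t / 2) * x ^ 2) := by
  have hu : 0 < t / 2 * x ^ 2 := by positivity
  have h3 : x ^ 2 * Real.exp (-(t / 2) * x ^ 2) ≤ 2 / t := by
    have hle : t / 2 * x ^ 2 ≤ Real.exp (t / 2 * x ^ 2) := by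
      linarith [Real.add_one_le_exp (t / 2 * x ^ 2)]
    calc x ^ 2 * Real.exp (-(t / 2) * x ^ 2) = x ^ 2 / Real.exp (t / 2 * x ^ 2) := by
          rw [eq_div_iff (Real.exp_pos _).ne', mul_assoc, ← Real.exp_add]
          norm_num
      _ ≤ x ^ 2 / (t / 2 * x ^ 2) := by
          apply div_le_div_of_nonneg_left (by positivity) hu hle
      _ = 2 / t := by field_simp
  have h2 : Real.exp (-t * x ^ 2) = Real.exp (-(t / 2) * x ^ 2) * Real.exp (-(t / 2) * x ^ 2) := by
    rw [← Real.exp_add]; ring_nf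
  calc x ^ 2 * Real.exp (-t * x ^ 2)
      = (x ^ 2 * Real.exp (-(t / 2) * x ^ 2)) * Real.exp (-(t / 2) * x ^ 2) := by rw [h2]; ring
    _ ≤ 2 / t * Real.exp (-(t / 2) * x ^ 2) := by
        apply mul_le_mul_of_nonneg_right h3 (Real.exp_pos _).le

lemma summable_thP {t : ℝ} (ht : 0 < t) :
    Summable (fun j : ℕ ↦ (2 * (j : ℝ) + 1) ^ 2 * Real.exp (-t * (2 * (j : ℝ) + 1) ^ 2)) := by
  have hr : Real.exp (-4 * t) < 1 := Real.exp_lt_one_iff.2 (by linarith)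
  refine Summable.of_nonneg_of_le
    (fun n ↦ mul_nonneg (by positivity) (Real.exp_pos _).le) (fun n ↦ ?_)
    ((summable_geometric_of_lt_one (Real.exp_pos _).le hr).mul_left
      ((2 / t) * Real.exp (-(t / 2))))
  have hx : (0 : ℝ) < 2 * (n : ℝ) + 1 := by positivity
  refine (poly_exp_le ht hx).trans ?_
  rw [mul_assoc, ← Real.exp_nat_mul, ← Real.exp_add]
  apply mul_le_mul_of_nonneg_left _ (by positivity)
  apply Real.exp_le_exp.2
  nlinarith [Nat.cast_nonneg (α := ℝ) n, nat_le_sq n]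

lemma nat_le_sq' (n : ℕ) : (n : ℝ) ≤ (n : ℝ) ^ 2 := by
  have : n ≤ n ^ 2 := Nat.le_self_pow (by norm_num) n
  exact_mod_cast this

lemma summable_nat_sq {t : ℝ} (ht : 0 < t) :
    Summable (fun n : ℕ ↦ Real.exp (-t * (n : ℝ) ^ 2)) := by
  have hr : Real.exp (-t) < 1 := Real.exp_lt_one_iff.2 (by linarith)
  refine Summable.of_nonneg_of_le (fun n ↦ (Real.exp_pos _).le)
    (fun n ↦ ?_) (summable_geometric_of_lt_one (Real.exp_pos _).le hr)
  rw [← Real.exp_nat_mul]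
  apply Real.exp_le_exp.2
  nlinarith [Nat.cast_nonneg (α := ℝ) n, nat_le_sq' n]

lemma summable_thZ {t : ℝ} (ht : 0 < t) :
    Summable (fun n : ℤ ↦ Real.exp (-t * (n : ℝ) ^ 2)) := by
  refine Summable.of_nat_of_neg_add_one (summable_nat_sq ht) ?_
  convert summable_thN ht using 2 with n
  push_cast
  ring_nf

lemma thZ_eq {t : ℝ} (ht : 0 < t) : thZ t = 1 + 2 * thN t := by
  have hsum := summable_thZ ht
  rw [thZ, ← tsum_nat_add_neg_add_one hsum]
  have h1 : ∀ n : ℕ, Real.exp (-t * ((n : ℤ) : ℝ) ^ 2) + Real.exp (-t * ((-((n : ℤ) + 1) : ℤ) : ℝ) ^ 2)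
      = Real.exp (-t * (n : ℝ) ^ 2) + Real.exp (-t * ((n : ℝ) + 1) ^ 2) := by
    intro n; push_cast; ring_nf
  rw [tsum_congr h1, Summable.tsum_add (summable_nat_sq ht) (summable_thN ht)]
  have h2 : ∑' n : ℕ, Real.exp (-t * (n : ℝ) ^ 2) = 1 + thN t := by
    rw [Summable.tsum_eq_zero_add (summable_nat_sq ht)]
    push_cast
    norm_num [thN]
  rw [h2, thN]
  ring

lemma thQ_eq {t : ℝ} (ht : 0 < t) : thQ t = thN t - thN (4 * t) := by
  have key : thQ t + (1 + thN (4 * t)) = 1 + thN t := by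
    have h := tsum_even_add_odd (f := fun n : ℕ ↦ Real.exp (-t * (n : ℝ) ^ 2)) ?_ ?_
    · have he : ∑' k : ℕ, Real.exp (-t * ((2 * k : ℕ) : ℝ) ^ 2) = 1 + thN (4 * t) := by
        rw [Summable.tsum_eq_zero_add] 
        · push_cast
          norm_num [thN]
          apply tsum_congr; intro n; congr 1; push_cast; ring
        · convert (summable_nat_sq (by linarith : (0:ℝ) < 4 * t)) using 2 with n
          · rfl
          · push_cast; ring_nf
      have ho : ∑' k : ℕ, Real.exp (-t * ((2 * k + 1 : ℕ) : ℝ) ^ 2) = thQ t := by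
        rw [thQ]; apply tsum_congr; intro n; congr 1; push_cast; ring
      have hn : ∑' n : ℕ, Real.exp (-t * (n : ℝ) ^ 2) = 1 + thN t := by
        rw [Summable.tsum_eq_zero_add (summable_nat_sq ht)]
        push_cast
        norm_num [thN]
      rw [he, ho] at h
      linarith [h, hn]
    · convert (summable_nat_sq (by linarith : (0:ℝ) < 4 * t)) using 2 with n
      push_cast; ring_nf
    · convert (summable_thQ ht) using 2 with n
      push_cast; ring
  linarith

lemma jacobi {t : ℝ} (ht : 0 < t) : thZ t = Real.sqrt (π / t) * thZ (π ^ 2 / t) := by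
  have hπ := Real.pi_pos
  have ha : 0 < t / π := by positivity
  have h := Real.tsum_exp_neg_mul_int_sq ha
  have h1 : ∀ n : ℤ, -π * (t / π) * (n : ℝ) ^ 2 = -t * (n : ℝ) ^ 2 := by
    intro n; field_simp
  have h2 : ∀ n : ℤ, -π / (t / π) * (n : ℝ) ^ 2 = -(π ^ 2 / t) * (n : ℝ) ^ 2 := by
    intro n
    rw [div_div_eq_mul_div, neg_mul, neg_div, ← sq]
  simp_rw [h1, h2] at h
  rw [thZ, thZ, h]
  congr 1
  rw [Real.sqrt_eq_rpow, show π / t = (t / π)⁻¹ by field_simp, Real.inv_rpow ha.le, one_div]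

lemma thN_nonneg {t : ℝ} : 0 ≤ thN t := tsum_nonneg (fun n ↦ (Real.exp_pos _).le)

lemma thN_le {t : ℝ} (ht : 1 ≤ t) : thN t ≤ 2 * Real.exp (-t) := by
  have ht0 : 0 < t := by linarith
  have hr1 : Real.exp (-t) < 1 := Real.exp_lt_one_iff.2 (by linarith)
  have hhalf : Real.exp (-t) ≤ 1 / 2 := by
    rw [Real.exp_neg]
    rw [inv_le_comm₀ (Real.exp_pos t) (by norm_num)]
    have := Real.add_one_le_exp t
    calc ((1:ℝ)/2)⁻¹ = 2 := by norm_num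
      _ ≤ Real.exp t := by linarith
  have step : ∀ n : ℕ, Real.exp (-t * ((n : ℝ) + 1) ^ 2) ≤ Real.exp (-t) * Real.exp (-t) ^ n := by
    intro n
    rw [← Real.exp_nat_mul, ← Real.exp_add]
    apply Real.exp_le_exp.2
    have : n ≤ n ^ 2 := Nat.le_self_pow (by norm_num) n
    have h2 : (n : ℝ) ≤ (n : ℝ) ^ 2 := by exact_mod_cast this
    nlinarith [Nat.cast_nonneg (α := ℝ) n]
  have hsum := (summable_geometric_of_lt_one (Real.exp_pos _).le hr1).mul_left (Real.exp (-t))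
  have h := Summable.tsum_le_tsum step (summable_thN ht0) hsum
  rw [tsum_mul_left, tsum_geometric_of_lt_one (Real.exp_pos _).le hr1] at h
  refine le_trans h ?_
  rw [mul_comm (2:ℝ)]
  apply mul_le_mul_of_nonneg_left _ (Real.exp_pos _).le
  rw [inv_le_comm₀ (by linarith) (by norm_num)]
  linarith

lemma sqrt_pi_div_pos {t : ℝ} (ht : 0 < t) : 0 < Real.sqrt (π / t) :=
  Real.sqrt_pos.2 (by have := Real.pi_pos; positivity)

lemma thZ_lb {t : ℝ} (ht : 0 < t) : Real.sqrt (π / t) ≤ thZ t := by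
  have hu : 0 < π ^ 2 / t := by positivity
  rw [jacobi ht, thZ_eq hu]
  nlinarith [sqrt_pi_div_pos ht, thN_nonneg (t := π ^ 2 / t)]

lemma thZ_ub {t : ℝ} (ht : 0 < t) (ht1 : t ≤ 1) :
    thZ t ≤ Real.sqrt (π / t) * (1 + 4 * Real.exp (-(π ^ 2 / t))) := by
  have hπ : (3:ℝ) ≤ π := by linarith [Real.pi_gt_three]
  have hu1 : 1 ≤ π ^ 2 / t := by
    rw [le_div_iff₀ ht]; nlinarith
  have hu : 0 < π ^ 2 / t := by linarith
  rw [jacobi ht, thZ_eq hu]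
  have := thN_le hu1
  nlinarith [sqrt_pi_div_pos ht, thN_nonneg (t := π ^ 2 / t)]

lemma thQ_half {t : ℝ} (ht : 0 < t) : thQ t = (thZ t - thZ (4 * t)) / 2 := by
  have h4 : 0 < 4 * t := by linarith
  rw [thQ_eq ht, thZ_eq ht, thZ_eq h4]; ring

lemma thQ_ub {t : ℝ} (ht : 0 < t) (ht1 : t ≤ 1 / 4) :
    thQ t ≤ Real.sqrt (π / t) * (1 / 4 + 2 * Real.exp (-(π ^ 2 / t))) := by
  have h4 : 0 < 4 * t := by linarith
  rw [thQ_half ht]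
  have h1 := thZ_ub ht (by linarith)
  have h2 := thZ_lb h4
  rw [show π / (4 * t) = (π / t) / 4 by ring] at h2
  have h3 : Real.sqrt ((π / t) / 4) = Real.sqrt (π / t) / 2 := by
    rw [show (π / t) / 4 = (π / t) * (1 / 2) ^ 2 by ring, Real.sqrt_mul' _ (by positivity),
      Real.sqrt_sq (by norm_num)]
    ring
  rw [h3] at h2
  linarith

lemma thQ_lb {t : ℝ} (ht : 0 < t) (ht1 : t ≤ 1 / 4) :
    Real.sqrt (π / t) * (1 / 4 - Real.exp (-(π ^ 2 / (4 * t)))) ≤ thQ t := by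
  have h4 : 0 < 4 * t := by linarith
  rw [thQ_half ht]
  have h1 := thZ_lb ht
  have h2 := thZ_ub h4 (by linarith)
  rw [show π / (4 * t) = (π / t) / 4 by ring] at h2
  have h3 : Real.sqrt ((π / t) / 4) = Real.sqrt (π / t) / 2 := by
    rw [show (π / t) / 4 = (π / t) * (1 / 2) ^ 2 by ring, Real.sqrt_mul' _ (by positivity),
      Real.sqrt_sq (by norm_num)]
    ring
  rw [h3] at h2
  have expand : Real.sqrt (π / t) * (1 / 4 - Real.exp (-(π ^ 2 / (4 * t)))) =
      (Real.sqrt (π / t) - Real.sqrt (π / t) / 2 * (1 + 4 * Real.exp (-(π ^ 2 / (4 * t))))) / 2 := by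
    ring
  rw [expand]
  linarith

lemma thP_convex {s s' : ℝ} (hs' : 0 < s') (hss : s' < s) :
    thP s ≤ (thQ s' - thQ s) / (s - s') := by
  have hs : 0 < s := lt_trans hs' hss
  have hd : 0 < s - s' := by linarith
  have step : ∀ j : ℕ, (2 * (j : ℝ) + 1) ^ 2 * Real.exp (-s * (2 * (j : ℝ) + 1) ^ 2) ≤
      (Real.exp (-s' * (2 * (j : ℝ) + 1) ^ 2) - Real.exp (-s * (2 * (j : ℝ) + 1) ^ 2)) / (s - s') := by
    intro j
    set c : ℝ := (2 * (j : ℝ) + 1) ^ 2 with hc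
    have hcpos : 0 < c := by positivity
    rw [le_div_iff₀ hd]
    have key : Real.exp (-s' * c) = Real.exp (-s * c) * Real.exp ((s - s') * c) := by
      rw [← Real.exp_add]; ring_nf
    rw [key]
    have h1 : (s - s') * c + 1 ≤ Real.exp ((s - s') * c) := Real.add_one_le_exp _
    have h2 : 0 < Real.exp (-s * c) := Real.exp_pos _
    nlinarith
  have hsub : Summable (fun j : ℕ ↦ (Real.exp (-s' * (2 * (j : ℝ) + 1) ^ 2) -
      Real.exp (-s * (2 * (j : ℝ) + 1) ^ 2)) / (s - s')) :=
    ((summable_thQ hs').sub (summable_thQ hs)).div_const _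
  have h := Summable.tsum_le_tsum step (summable_thP hs) hsub
  rw [tsum_div_const, Summable.tsum_sub (summable_thQ hs') (summable_thQ hs)] at h
  exact h

lemma sq25 : ∀ j : ℕ, (2 * (j : ℝ) + 3) ^ 2 ≤ 9 * (25 / 9) ^ j := by
  intro j
  induction j with
  | zero => norm_num
  | succ n ih =>
    have hn : (0:ℝ) ≤ (n : ℝ) := Nat.cast_nonneg n
    have key : (2 * ((n : ℝ) + 1) + 3) ^ 2 ≤ (25 / 9) * (2 * (n : ℝ) + 3) ^ 2 := by nlinarith
    calc (2 * ((n + 1 : ℕ) : ℝ) + 3) ^ 2 = (2 * ((n : ℝ) + 1) + 3) ^ 2 := by push_cast; ring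
      _ ≤ (25 / 9) * (2 * (n : ℝ) + 3) ^ 2 := key
      _ ≤ (25 / 9) * (9 * (25 / 9) ^ n) := by nlinarith
      _ = 9 * (25 / 9) ^ (n + 1) := by ring

lemma nat_le_sq'' (n : ℕ) : (n : ℝ) ≤ (n : ℝ) ^ 2 := by
  have : n ≤ n ^ 2 := Nat.le_self_pow (by norm_num) n
  exact_mod_cast this

lemma exp_sq_bounds : (7 : ℝ) ≤ Real.exp 1 ^ 2 ∧ (54 : ℝ) ≤ Real.exp 1 ^ 4 := by
  have h := Real.exp_one_gt_d9
  have h2 : (7.389 : ℝ) ≤ Real.exp 1 ^ 2 := by nlinarith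
  constructor
  · linarith
  · nlinarith

lemma core_caseA {s : ℝ} (hs : 1 / 4 ≤ s) : thP s - thQ s / (2 * s) ≤ Real.exp (-s) := by
  have hs0 : 0 < s := by linarith
  -- thQ s ≥ exp (-s)
  have hQ1 : Real.exp (-s) ≤ thQ s := by
    have h0 := Summable.le_tsum (summable_thQ hs0) 0 (fun j _ ↦ (Real.exp_pos _).le)
    rw [thQ]
    calc Real.exp (-s) = Real.exp (-s * (2 * ((0:ℕ) : ℝ) + 1) ^ 2) := by norm_num
      _ ≤ _ := h0
  -- split thP
  have hPsplit : thP s = Real.exp (-s) +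
      ∑' j : ℕ, (2 * ((j : ℝ) + 1) + 1) ^ 2 * Real.exp (-s * (2 * ((j : ℝ) + 1) + 1) ^ 2) := by
    rw [thP, Summable.tsum_eq_zero_add (summable_thP hs0)]
    norm_num
  set r : ℝ := (25 / 9) * Real.exp (-16 * s) with hr
  have hrpos : 0 < r := by positivity
  have hrlt : r < 1 := by
    have h4 : Real.exp (-16 * s) ≤ Real.exp (-4) := Real.exp_le_exp.2 (by linarith)
    have : Real.exp (-4) < 9 / 25 := by
      rw [Real.exp_neg, inv_lt_comm₀ (Real.exp_pos _) (by norm_num)]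
      have h := Real.add_one_le_exp (4:ℝ)
      linarith
    rw [hr]; nlinarith
  -- tail bound
  have tail_le : ∑' j : ℕ, (2 * ((j : ℝ) + 1) + 1) ^ 2 * Real.exp (-s * (2 * ((j : ℝ) + 1) + 1) ^ 2)
      ≤ 9 * Real.exp (-9 * s) * (1 - r)⁻¹ := by
    have step : ∀ j : ℕ, (2 * ((j : ℝ) + 1) + 1) ^ 2 * Real.exp (-s * (2 * ((j : ℝ) + 1) + 1) ^ 2)
        ≤ 9 * Real.exp (-9 * s) * r ^ j := by
      intro j
      have hj : (0:ℝ) ≤ (j : ℝ) := Nat.cast_nonneg j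
      have e0 : (2 * ((j : ℝ) + 1) + 1) = 2 * (j : ℝ) + 3 := by ring
      rw [e0]
      have e2 : Real.exp (-s * (2 * (j : ℝ) + 3) ^ 2) ≤
          Real.exp (-9 * s) * Real.exp (-16 * s) ^ j := by
        rw [← Real.exp_nat_mul, ← Real.exp_add]
        apply Real.exp_le_exp.2
        nlinarith [mul_le_mul_of_nonneg_left (nat_le_sq'' j) hs0.le]
      have e3 := sq25 j
      calc (2 * (j : ℝ) + 3) ^ 2 * Real.exp (-s * (2 * (j : ℝ) + 3) ^ 2)
          ≤ (2 * (j : ℝ) + 3) ^ 2 * (Real.exp (-9 * s) * Real.exp (-16 * s) ^ j) := by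
            apply mul_le_mul_of_nonneg_left e2 (by positivity)
        _ ≤ 9 * (25 / 9) ^ j * (Real.exp (-9 * s) * Real.exp (-16 * s) ^ j) := by
            apply mul_le_mul_of_nonneg_right e3 (by positivity)
        _ = 9 * Real.exp (-9 * s) * r ^ j := by rw [hr, mul_pow]; ring
    have hgeom : Summable (fun j : ℕ ↦ 9 * Real.exp (-9 * s) * r ^ j) :=
      (summable_geometric_of_lt_one hrpos.le hrlt).mul_left _
    have hsumL : Summable (fun j : ℕ ↦
        (2 * ((j : ℝ) + 1) + 1) ^ 2 * Real.exp (-s * (2 * ((j : ℝ) + 1) + 1) ^ 2)) := by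
      have := (summable_thP hs0).comp_injective (add_right_injective 1)
      convert this using 2 with j
      · rfl
      · simp [Function.comp]
        push_cast
        ring_nf
    have h := Summable.tsum_le_tsum step hsumL hgeom
    rwa [tsum_mul_left, tsum_geometric_of_lt_one hrpos.le hrlt] at h
  -- numeric: 9 exp(-9s) (1-r)⁻¹ ≤ exp(-s)/(2s)
  have numeric : 9 * Real.exp (-9 * s) * (1 - r)⁻¹ ≤ Real.exp (-s) / (2 * s) := by
    have h1r : 0 < 1 - r := by linarith
    have h2s : 0 < 2 * s := by linarith
    -- reduces to 18 s exp(-8s) ≤ 1 - r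
    have key : 18 * s * Real.exp (-8 * s) ≤ 1 - r := by
      have hA : s * Real.exp (-8 * s) ≤ 1 / (4 * Real.exp 1 ^ 2) := by
        have hE : Real.exp 1 ^ 2 * (8 * s - 1) ≤ Real.exp (8 * s) := by
          have e1 : Real.exp (8 * s) = Real.exp 1 ^ 2 * Real.exp (8 * s - 2) := by
            rw [← Real.exp_nat_mul, ← Real.exp_add]; norm_num
          have e2 : 8 * s - 1 ≤ Real.exp (8 * s - 2) := by
            have := Real.add_one_le_exp (8 * s - 2); linarith
          rw [e1]
          have : (0:ℝ) < Real.exp 1 ^ 2 := by positivity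
          nlinarith
        have h4s : 4 * s ≤ 8 * s - 1 := by linarith
        have hex : 4 * s * Real.exp 1 ^ 2 ≤ Real.exp (8 * s) := by nlinarith [sq_nonneg (Real.exp 1)]
        have hneg : Real.exp (-8 * s) = (Real.exp (8 * s))⁻¹ := by
          rw [← Real.exp_neg]; ring_nf
        rw [hneg, ← div_eq_mul_inv, div_le_div_iff₀ (Real.exp_pos _) (by positivity)]
        nlinarith
      have hB : r ≤ 25 / 9 * Real.exp (-4) := by
        rw [hr]
        have : Real.exp (-16 * s) ≤ Real.exp (-4) := Real.exp_le_exp.2 (by linarith)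
        nlinarith
      have hC : 25 / 9 * Real.exp (-4) ≤ 25 / (9 * 54) := by
        have h54 : (54:ℝ) ≤ Real.exp 1 ^ 4 := exp_sq_bounds.2
        have e4 : Real.exp (4:ℝ) = Real.exp 1 ^ 4 := by
          rw [← Real.exp_nat_mul]; norm_num
        have hh : Real.exp (-4:ℝ) ≤ 1 / 54 := by
          rw [Real.exp_neg, e4, inv_le_comm₀ (by positivity) (by norm_num)]
          calc ((1:ℝ)/54)⁻¹ = 54 := by norm_num
            _ ≤ Real.exp 1 ^ 4 := h54
        nlinarith
      have hD : 18 * s * Real.exp (-8 * s) ≤ 18 / (4 * Real.exp 1 ^ 2) := by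
        have h18 : (0:ℝ) < 18 := by norm_num
        calc 18 * s * Real.exp (-8 * s) = 18 * (s * Real.exp (-8 * s)) := by ring
          _ ≤ 18 * (1 / (4 * Real.exp 1 ^ 2)) := by linarith
          _ = 18 / (4 * Real.exp 1 ^ 2) := by ring
      have h7 : (7:ℝ) ≤ Real.exp 1 ^ 2 := exp_sq_bounds.1
      have : 18 / (4 * Real.exp 1 ^ 2) ≤ 18 / 28 := by
        apply div_le_div_of_nonneg_left (by norm_num) (by norm_num) (by linarith)
      nlinarith
    -- now conclude
    rw [← div_eq_mul_inv, div_le_div_iff₀ h1r h2s]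
    have e9 : Real.exp (-9 * s) = Real.exp (-8 * s) * Real.exp (-s) := by
      rw [← Real.exp_add]; ring_nf
    rw [e9]
    nlinarith [key, Real.exp_pos (-s)]
  have hQdiv : Real.exp (-s) / (2 * s) ≤ thQ s / (2 * s) := by gcongr
  linarith [tail_le, numeric, hQdiv, hPsplit.le, hPsplit.ge]

lemma exp_bound_E {s : ℝ} (hs : 0 < s) (hs4 : s ≤ 1 / 4) :
    Real.exp (-(π ^ 2 / (4 * s))) ≤ s ^ 3 / 20 := by
  have hy : (1 : ℝ) ≤ 1 / (4 * s) := by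
    rw [le_div_iff₀ (by linarith)]; linarith
  set y : ℝ := 1 / (4 * s) with hydef
  have hy0 : 0 < y := by linarith
  have hsy : s = 1 / (4 * y) := by
    rw [hydef]; field_simp
  have hpi : (3 : ℝ) ≤ π := by linarith [Real.pi_gt_three]
  -- exp (π² y) ≥ 1280 y³
  have h1 : Real.exp 1 * y ≤ Real.exp y := by
    have hthis := Real.add_one_le_exp (y - 1)
    have he : Real.exp (y - 1) = Real.exp y / Real.exp 1 := by rw [Real.exp_sub]
    rw [he] at hthis
    have hE1 : 0 < Real.exp 1 := Real.exp_pos 1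
    have h' := mul_le_mul_of_nonneg_right hthis hE1.le
    have hc : Real.exp y / Real.exp 1 * Real.exp 1 = Real.exp y := by field_simp
    rw [hc] at h'
    nlinarith
  have h2 : (Real.exp 1 * y) ^ 9 ≤ (Real.exp y) ^ 9 :=
    pow_le_pow_left₀ (by positivity) h1 9
  have h3 : (Real.exp y) ^ 9 = Real.exp (9 * y) := by
    rw [← Real.exp_nat_mul]; norm_num
  have h4 : Real.exp (9 * y) ≤ Real.exp (π ^ 2 * y) := by
    apply Real.exp_le_exp.2
    nlinarith [mul_le_mul_of_nonneg_right (show (9:ℝ) ≤ π ^ 2 by nlinarith) hy0.le]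
  have hy9 : y ^ 3 ≤ y ^ 9 := by
    calc y ^ 3 = y ^ 3 * 1 := by ring
      _ ≤ y ^ 3 * y ^ 6 := by
          apply mul_le_mul_of_nonneg_left _ (by positivity)
          exact one_le_pow₀ hy
      _ = y ^ 9 := by ring
  have he9 : (1280 : ℝ) ≤ Real.exp 1 ^ 9 := by
    have h := Real.exp_one_gt_d9
    have h2' : (2.71 : ℝ) ^ 9 ≤ Real.exp 1 ^ 9 := pow_le_pow_left₀ (by norm_num) (by linarith) 9
    nlinarith
  have hkey : 1280 * y ^ 3 ≤ Real.exp (π ^ 2 * y) := by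
    have : (Real.exp 1 * y) ^ 9 = Real.exp 1 ^ 9 * y ^ 9 := by ring
    nlinarith [pow_nonneg hy0.le 3, pow_nonneg hy0.le 9]
  -- conclude
  have harg : -(π ^ 2 / (4 * s)) = -(π ^ 2 * y) := by
    rw [hydef]; field_simp
  rw [harg, Real.exp_neg]
  rw [inv_le_comm₀ (Real.exp_pos _) (by positivity)]
  rw [hsy]
  have hexpand : ((1 / (4 * y)) ^ 3 / 20)⁻¹ = 1280 * y ^ 3 := by
    field_simp; ring
  rw [hexpand]
  exact hkey
lemma haux_poly {d : ℝ} (hd0 : 0 ≤ d) (hd8 : d ≤ 1 / 8) :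
    1 ≤ (1 - d) * (1 + d / 2 + d ^ 2) ^ 2 := by
  nlinarith [sq_nonneg d, mul_le_mul_of_nonneg_left hd8 (sq_nonneg d),
    mul_le_mul_of_nonneg_left (mul_le_mul_of_nonneg_left hd8 hd0) (sq_nonneg d),
    mul_nonneg (mul_nonneg hd0 hd0) hd0]

lemma polycore {p q E : ℝ} (hq0 : 0 < q) (hqhalf : q ≤ 1 / 2) (hE0 : 0 ≤ E)
    (hEb : E ≤ q ^ 6 / 20) (hp0 : 0 ≤ p) (hp : p ≤ 16 / 9) :
    p * ((1 + q ^ 3 / 2 + (q ^ 3) ^ 2) * (1 / 4 + 2 * E) - (1 / 4 - E)) ≤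
      (1 - q ^ 2) * q ^ 6 + p * (1 / 4 - E) * (q ^ 3 / 2) := by
  have hq3 : q ^ 3 ≤ 1 / 8 := by
    calc q ^ 3 ≤ (1/2) ^ 3 := pow_le_pow_left₀ hq0.le hqhalf 3
      _ = 1 / 8 := by norm_num
  have hq6 : q ^ 6 ≤ 1 / 64 := by
    calc q ^ 6 ≤ (1/2) ^ 6 := pow_le_pow_left₀ hq0.le hqhalf 6
      _ = 1 / 64 := by norm_num
  have hq2 : q ^ 2 ≤ 1 / 4 := by
    calc q ^ 2 ≤ (1/2) ^ 2 := pow_le_pow_left₀ hq0.le hqhalf 2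
      _ = 1 / 4 := by norm_num
  have key : p * ((1 + q ^ 3 / 2 + (q ^ 3) ^ 2) * (1 / 4 + 2 * E) - (1 / 4 - E)) -
      p * (1 / 4 - E) * (q ^ 3 / 2) =
      p * (3 * E + (3 / 2) * E * q ^ 3 + 2 * E * q ^ 6 + q ^ 6 / 4) := by ring
  have hEq2 : E * q ^ 3 ≤ (q ^ 6 / 20) * (1 / 8) :=
    mul_le_mul hEb hq3 (by positivity) (by positivity)
  have hEq3 : E * q ^ 6 ≤ (q ^ 6 / 20) * (1 / 64) :=
    mul_le_mul hEb hq6 (by positivity) (by positivity)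
  have hsum : 3 * E + (3 / 2) * E * q ^ 3 + 2 * E * q ^ 6 + q ^ 6 / 4 ≤ (263 / 640) * q ^ 6 := by
    nlinarith
  have hnn : (0:ℝ) ≤ 3 * E + (3 / 2) * E * q ^ 3 + 2 * E * q ^ 6 + q ^ 6 / 4 := by positivity
  have hfin : p * (3 * E + (3 / 2) * E * q ^ 3 + 2 * E * q ^ 6 + q ^ 6 / 4) ≤
      (16 / 9) * ((263 / 640) * q ^ 6) := by
    calc p * (3 * E + (3 / 2) * E * q ^ 3 + 2 * E * q ^ 6 + q ^ 6 / 4)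
        ≤ (16 / 9) * (3 * E + (3 / 2) * E * q ^ 3 + 2 * E * q ^ 6 + q ^ 6 / 4) :=
          mul_le_mul_of_nonneg_right hp hnn
      _ ≤ (16 / 9) * ((263 / 640) * q ^ 6) := by nlinarith
  have hrhs : (16 / 9) * ((263 / 640) * q ^ 6) ≤ (1 - q ^ 2) * q ^ 6 := by
    have h6 : (0:ℝ) ≤ q ^ 6 := by positivity
    nlinarith
  linarith

lemma sqrt_pi_le : Real.sqrt π ≤ 16 / 9 := by
  have h := Real.pi_lt_d2
  calc Real.sqrt π ≤ Real.sqrt ((16 / 9) ^ 2) := Real.sqrt_le_sqrt (by nlinarith)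
    _ = 16 / 9 := Real.sqrt_sq (by norm_num)

lemma core_caseB {s : ℝ} (hs : 0 < s) (hs4 : s ≤ 1 / 4) :
    thP s - thQ s / (2 * s) ≤ Real.exp (-s) := by
  set q : ℝ := Real.sqrt s with hqdef
  have hq0 : 0 < q := Real.sqrt_pos.2 hs
  have hq2 : q ^ 2 = s := Real.sq_sqrt hs.le
  have hqhalf : q ≤ 1 / 2 := by
    rw [hqdef]
    calc Real.sqrt s ≤ Real.sqrt (1 / 4) := Real.sqrt_le_sqrt hs4
      _ = 1 / 2 := by
          rw [show (1:ℝ)/4 = (1/2)^2 by norm_num, Real.sqrt_sq (by norm_num)]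
  set δ : ℝ := q ^ 3 with hδdef
  have hδ0 : 0 < δ := by positivity
  have hδ8 : δ ≤ 1 / 8 := by
    calc δ = q ^ 3 := hδdef
      _ ≤ (1 / 2) ^ 3 := pow_le_pow_left₀ hq0.le hqhalf 3
      _ = 1 / 8 := by norm_num
  have hδs : δ * s = q ^ 5 := by rw [hδdef, ← hq2]; ring
  set s' : ℝ := s * (1 - δ) with hs'def
  have hs'0 : 0 < s' := by
    rw [hs'def]; apply mul_pos hs; linarith
  have hs's : s' < s := by
    rw [hs'def]; nlinarith
  have hss' : s - s' = δ * s := by rw [hs'def]; ring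
  set E : ℝ := Real.exp (-(π ^ 2 / (4 * s))) with hEdef
  have hE0 : 0 < E := Real.exp_pos _
  have hEb : E ≤ q ^ 6 / 20 := by
    rw [hEdef]
    calc Real.exp (-(π ^ 2 / (4 * s))) ≤ s ^ 3 / 20 := exp_bound_E hs hs4
      _ = q ^ 6 / 20 := by rw [← hq2]; ring
  set S : ℝ := Real.sqrt (π / s) with hSdef
  have hπ0 : 0 < π := Real.pi_pos
  have hS0 : 0 < S := Real.sqrt_pos.2 (by positivity)
  have hSq : S * q = Real.sqrt π := by
    rw [hSdef, hqdef, ← Real.sqrt_mul (by positivity)]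
    congr 1
    field_simp
  -- bound on sqrt(π/s')
  have hδ1 : 0 < 1 - δ := by linarith
  have hsqrt' : Real.sqrt (π / s') ≤ S * (1 + δ / 2 + δ ^ 2) := by
    have haux : 1 ≤ (1 - δ) * (1 + δ / 2 + δ ^ 2) ^ 2 := haux_poly hδ0.le hδ8
    have h1 : π / s' ≤ (π / s) * (1 + δ / 2 + δ ^ 2) ^ 2 := by
      rw [hs'def, div_le_iff₀ (by positivity)]
      have expand : π / s * (1 + δ / 2 + δ ^ 2) ^ 2 * (s * (1 - δ)) =
          π * ((1 - δ) * (1 + δ / 2 + δ ^ 2) ^ 2) := by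
        field_simp
      rw [expand]
      nlinarith [hπ0]
    calc Real.sqrt (π / s') ≤ Real.sqrt ((π / s) * (1 + δ / 2 + δ ^ 2) ^ 2) :=
          Real.sqrt_le_sqrt h1
      _ = S * (1 + δ / 2 + δ ^ 2) := by
          rw [Real.sqrt_mul (by positivity), Real.sqrt_sq (by positivity), hSdef]
  -- bounds on thQ s' and thQ s
  have hQs'ub : thQ s' ≤ S * (1 + δ / 2 + δ ^ 2) * (1 / 4 + 2 * E) := by
    have h1 := thQ_ub hs'0 (by linarith)
    have h2 : Real.exp (-(π ^ 2 / s')) ≤ E := by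
      rw [hEdef]
      apply Real.exp_le_exp.2
      rw [neg_le_neg_iff]
      apply div_le_div_of_nonneg_left (by positivity) hs'0
      linarith
    have h3 : Real.sqrt (π / s') * (1 / 4 + 2 * Real.exp (-(π ^ 2 / s'))) ≤
        S * (1 + δ / 2 + δ ^ 2) * (1 / 4 + 2 * E) := by
      apply mul_le_mul hsqrt' (by linarith) (by positivity)
      positivity
    linarith
  have hQslb : S * (1 / 4 - E) ≤ thQ s := by
    have := thQ_lb hs hs4
    rw [← hSdef, ← hEdef] at this
    exact this
  -- assemble
  have hconv := thP_convex hs'0 hs's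
  rw [hss'] at hconv
  set U : ℝ := S * (1 + δ / 2 + δ ^ 2) * (1 / 4 + 2 * E) with hUdef
  set L : ℝ := S * (1 / 4 - E) with hLdef
  have hstep1 : (thQ s' - thQ s) / (δ * s) ≤ (U - L) / (δ * s) := by
    have hnum : thQ s' - thQ s ≤ U - L := sub_le_sub hQs'ub hQslb
    gcongr
  have hstep2 : L / (2 * s) ≤ thQ s / (2 * s) := by gcongr
  have hkey : (U - L) / (δ * s) ≤ (1 - s) + L / (2 * s) := by
    rw [div_le_iff₀ (by positivity)]
    have hexpand : ((1 - s) + L / (2 * s)) * (δ * s) = (1 - s) * (δ * s) + L * (δ / 2) := by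
      field_simp
    rw [hexpand]
    rw [← mul_le_mul_iff_of_pos_right hq0]
    have hLq : (U - L) * q = Real.sqrt π *
        ((1 + δ / 2 + δ ^ 2) * (1 / 4 + 2 * E) - (1 / 4 - E)) := by
      rw [hUdef, hLdef, ← hSq]; ring
    have hRq : ((1 - s) * (δ * s) + L * (δ / 2)) * q =
        (1 - q ^ 2) * q ^ 6 + Real.sqrt π * (1 / 4 - E) * (q ^ 3 / 2) := by
      rw [hLdef, ← hSq, ← hq2, hδdef]; ring
    rw [hLq, hRq, hδdef]
    exact polycore hq0 hqhalf hE0.le hEb (Real.sqrt_nonneg π) sqrt_pi_le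
  have hes : 1 - s ≤ Real.exp (-s) := by
    have := Real.add_one_le_exp (-s); linarith
  calc thP s - thQ s / (2 * s) ≤ (thQ s' - thQ s) / (δ * s) - thQ s / (2 * s) := by
        linarith [hconv]
    _ ≤ (U - L) / (δ * s) - L / (2 * s) := by linarith [hstep1, hstep2]
    _ ≤ 1 - s := by linarith [hkey]
    _ ≤ Real.exp (-s) := hes

lemma core {s : ℝ} (hs : 0 < s) : thP s - thQ s / (2 * s) ≤ Real.exp (-s) := by
  rcases le_or_gt s (1 / 4) with h | h
  · exact core_caseB hs h
  · exact core_caseA h.le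

lemma series_bound {v : ℝ} (hv : 0 < v) :
    (∑' j : ℕ, ((2 * (j : ℝ) + 1) ^ 2 * Real.pi ^ 2 - v) *
      Real.exp (-((2 * (j : ℝ) + 1) ^ 2 * Real.pi ^ 2) / (2 * v))) ≤
      Real.pi ^ 2 * Real.exp (-(Real.pi ^ 2 / (2 * v))) := by
  have hπ : 0 < π := Real.pi_pos
  set s : ℝ := π ^ 2 / (2 * v) with hsdef
  have hs : 0 < s := by positivity
  have hexparg : ∀ j : ℕ, -((2 * (j : ℝ) + 1) ^ 2 * π ^ 2) / (2 * v) =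
      -s * (2 * (j : ℝ) + 1) ^ 2 := by
    intro j; rw [hsdef]; field_simp
  have hterm : ∀ j : ℕ, ((2 * (j : ℝ) + 1) ^ 2 * π ^ 2 - v) *
      Real.exp (-((2 * (j : ℝ) + 1) ^ 2 * π ^ 2) / (2 * v)) =
      π ^ 2 * ((2 * (j : ℝ) + 1) ^ 2 * Real.exp (-s * (2 * (j : ℝ) + 1) ^ 2)) -
      v * Real.exp (-s * (2 * (j : ℝ) + 1) ^ 2) := by
    intro j; rw [hexparg j]; ring
  rw [tsum_congr hterm, Summable.tsum_sub ((summable_thP hs).mul_left _) ((summable_thQ hs).mul_left _),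
    tsum_mul_left, tsum_mul_left, ← thP, ← thQ]
  have hveq : v = π ^ 2 / (2 * s) := by rw [hsdef]; field_simp
  have hcore := core hs
  have h2s : 0 < 2 * s := by linarith
  -- π² * thP s - v * thQ s ≤ π² exp(-s)
  have : π ^ 2 * thP s - v * thQ s = π ^ 2 * (thP s - thQ s / (2 * s)) := by
    rw [hveq]; field_simp
  rw [this]
  have hfin : π ^ 2 * (thP s - thQ s / (2 * s)) ≤ π ^ 2 * Real.exp (-s) := by
    apply mul_le_mul_of_nonneg_left hcore (by positivity)
  exact hfin

/-- on `0 < v ≤ v*`, the ratio of the small-`v` series of the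
logistic Kolmogorov density to the `InverseGamma(α, π²/2)` density is bounded by
`δ1(v) = √(2π⁵) Γ(α) / (π²/2)^α · v^{α−3/2}`. -/
theorem stmt11 (α vstar : ℝ) (hα : 0 < α) (hvstar : 0 < vstar) :
    ∀ v : ℝ, 0 < v → v ≤ vstar →
      (v ^ (-(5 : ℝ) / 2) * Real.sqrt (2 * Real.pi) *
          ∑' j : ℕ, ((2 * (j : ℝ) + 1) ^ 2 * Real.pi ^ 2 - v) *
            Real.exp (-((2 * (j : ℝ) + 1) ^ 2 * Real.pi ^ 2) / (2 * v))) /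
        invGammaDensity α (Real.pi ^ 2 / 2) v ≤
      Real.sqrt (2 * Real.pi ^ 5) * Real.Gamma α / (Real.pi ^ 2 / 2) ^ α *
        v ^ (α - 3 / 2) := by
  intro v hv _
  have hπ : 0 < π := Real.pi_pos
  have hΓ : 0 < Real.Gamma α := Real.Gamma_pos_of_pos hα
  have hγ : 0 < π ^ 2 / 2 := by positivity
  have hγα : 0 < (π ^ 2 / 2) ^ α := Real.rpow_pos_of_pos hγ α
  have hD : invGammaDensity α (π ^ 2 / 2) v =
      (π ^ 2 / 2) ^ α * v ^ (-α - 1) * Real.exp (-(π ^ 2 / 2) / v) / Real.Gamma α := by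
    rw [invGammaDensity, if_pos hv]
  have hDpos : 0 < invGammaDensity α (π ^ 2 / 2) v := by
    rw [hD]
    have := Real.rpow_pos_of_pos hv (-α - 1)
    positivity
  rw [div_le_iff₀ hDpos, hD]
  -- RHS * D
  have hsqrt : Real.sqrt (2 * π ^ 5) = Real.sqrt (2 * π) * π ^ 2 := by
    rw [show 2 * π ^ 5 = (2 * π) * (π ^ 2) ^ 2 by ring, Real.sqrt_mul (by positivity),
      Real.sqrt_sq (by positivity)]
  have hrpow : v ^ (α - 3 / 2) * v ^ (-α - 1) = v ^ (-(5 : ℝ) / 2) := by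
    rw [← Real.rpow_add hv]; congr 1; ring
  have hRHS : Real.sqrt (2 * π ^ 5) * Real.Gamma α / (π ^ 2 / 2) ^ α * v ^ (α - 3 / 2) *
      ((π ^ 2 / 2) ^ α * v ^ (-α - 1) * Real.exp (-(π ^ 2 / 2) / v) / Real.Gamma α) =
      v ^ (-(5 : ℝ) / 2) * Real.sqrt (2 * π) * (π ^ 2 * Real.exp (-(π ^ 2 / (2 * v)))) := by
    have harg : -(π ^ 2 / 2) / v = -(π ^ 2 / (2 * v)) := by ring
    rw [hsqrt, harg]
    calc Real.sqrt (2 * π) * π ^ 2 * Real.Gamma α / (π ^ 2 / 2) ^ α * v ^ (α - 3 / 2) *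
        ((π ^ 2 / 2) ^ α * v ^ (-α - 1) * Real.exp (-(π ^ 2 / (2 * v))) / Real.Gamma α) =
        Real.sqrt (2 * π) * π ^ 2 * (v ^ (α - 3 / 2) * v ^ (-α - 1)) *
          Real.exp (-(π ^ 2 / (2 * v))) * (Real.Gamma α / Real.Gamma α) *
          ((π ^ 2 / 2) ^ α / (π ^ 2 / 2) ^ α) := by ring
      _ = v ^ (-(5 : ℝ) / 2) * Real.sqrt (2 * π) * (π ^ 2 * Real.exp (-(π ^ 2 / (2 * v)))) := by
          rw [div_self hΓ.ne', div_self hγα.ne', hrpow]; ring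
  rw [hRHS]
  have hmono : v ^ (-(5 : ℝ) / 2) * Real.sqrt (2 * π) *
      (∑' j : ℕ, ((2 * (j : ℝ) + 1) ^ 2 * π ^ 2 - v) *
        Real.exp (-((2 * (j : ℝ) + 1) ^ 2 * π ^ 2) / (2 * v))) ≤
      v ^ (-(5 : ℝ) / 2) * Real.sqrt (2 * π) * (π ^ 2 * Real.exp (-(π ^ 2 / (2 * v)))) := by
    apply mul_le_mul_of_nonneg_left (series_bound hv)
    have := Real.rpow_pos_of_pos hv (-(5:ℝ)/2)
    positivity
  exact hmono
end

section
/- Suppose a prior on β ∈ R^p satisfies the stochastic representation β = X'(XX')^{-1} U2 where X is an n×p matrix with XX' invertible and U2 ~ G2 on R^n. Then the posterior of β in the LSBR model with likelihood ∏_i Λ((2y_i−1) x_i'β) has the representation β | Y=y = X'(XX')^{-1} U2 | (U1 ≤ B_y U2), where U1 has independent components with marginal CDF Λ, independent of U2, and B_y = 2diag(y) − I_n. -/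
open MeasureTheory ProbabilityTheory Matrix
open scoped ENNReal

lemma measurable_mulVec' {n p : ℕ} (M : Matrix (Fin n) (Fin p) ℝ) :
    Measurable (fun v : Fin p → ℝ => M.mulVec v) := by
  apply measurable_pi_lambda
  intro i
  simp only [Matrix.mulVec, dotProduct]
  exact Finset.measurable_sum Finset.univ
    (fun j _ => by fun_prop)

/-- if the prior satisfies `β = X'(XX')⁻¹ U2` with `U2 ~ G2`, and
`U1` has independent components with marginal CDF `Λ`, independent of `U2`, then
the posterior of `β` in the LSBR model (likelihood `∏ Λ((2yᵢ−1) xᵢ'β)`) is the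
law of `X'(XX')⁻¹ U2` conditioned on `{U1 ≤ B_y U2}`. -/
theorem stmt15
    {Ωs : Type*} [MeasurableSpace Ωs] (μ : Measure Ωs) [IsProbabilityMeasure μ]
    {n p : ℕ}
    (X : Matrix (Fin n) (Fin p) ℝ) [Invertible (X * Xᵀ)]
    (U1 U2 : Ωs → (Fin n → ℝ))
    (hU1 : Measurable U1) (hU2 : Measurable U2)
    (hindep : IndepFun U1 U2 μ)
    (hiid : iIndepFun (fun i ω => U1 ω i) μ)
    (Λ : ℝ → ℝ)
    (hΛ : ∀ (i : Fin n) (x : ℝ), (μ {ω | U1 ω i ≤ x}).toReal = Λ x)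
    (y : Fin n → ℝ) (hy : ∀ i, y i = 0 ∨ y i = 1)
    (β : Ωs → (Fin p → ℝ))
    (hβ : β = fun ω => (Xᵀ * (X * Xᵀ)⁻¹).mulVec (U2 ω))
    (E : Set Ωs) (hE : E = {ω | ∀ i, U1 ω i ≤ (2 * y i - 1) * U2 ω i})
    (hpos : 0 < μ E) :
    ∃ c : ℝ≥0∞, c ≠ 0 ∧
      (μ[|E]).map β = c • (μ.map β).withDensity
        (fun b => ENNReal.ofReal (∏ i, Λ ((2 * y i - 1) * X.mulVec b i))) := by
  classical
  have hβmeas : Measurable β := by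
    rw [hβ]; exact (measurable_mulVec' _).comp hU2
  -- Λ is nonneg and monotone (once we have an index to evaluate hΛ)
  have hΛnn : ∀ i : Fin n, ∀ x, 0 ≤ Λ x := by
    intro i x; rw [← hΛ i x]; exact ENNReal.toReal_nonneg
  have hΛmono : ∀ _i : Fin n, Monotone Λ := by
    intro i a b hab
    rw [← hΛ i a, ← hΛ i b]
    exact ENNReal.toReal_mono (measure_ne_top μ _)
      (measure_mono fun ω h => le_trans h hab)
  -- the density as a product of ENNReal's
  set F : (Fin n → ℝ) → ℝ≥0∞ :=
    fun v => ∏ i, ENNReal.ofReal (Λ ((2 * y i - 1) * v i)) with hFdef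
  have hFmeas : Measurable F := by
    apply Finset.measurable_prod
    intro i _
    exact ENNReal.measurable_ofReal.comp
      ((hΛmono i).measurable.comp ((measurable_pi_apply i).const_mul _))
  have hfF : ∀ v : Fin n → ℝ,
      ENNReal.ofReal (∏ i, Λ ((2 * y i - 1) * v i)) = F v := by
    intro v
    rw [hFdef]
    rcases isEmpty_or_nonempty (Fin n) with h | h
    · simp
    · exact ENNReal.ofReal_prod_of_nonneg (fun i _ => hΛnn h.some _)
  have hfmeas : Measurable (fun b : Fin p → ℝ =>
      ENNReal.ofReal (∏ i, Λ ((2 * y i - 1) * X.mulVec b i))) := by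
    have : (fun b : Fin p → ℝ =>
        ENNReal.ofReal (∏ i, Λ ((2 * y i - 1) * X.mulVec b i)))
        = F ∘ (fun b => X.mulVec b) := by
      funext b; exact hfF _
    rw [this]
    exact hFmeas.comp (measurable_mulVec' X)
  -- matrix identity
  have hid : ∀ ω, X.mulVec (β ω) = U2 ω := by
    intro ω
    rw [hβ]
    simp only
    rw [Matrix.mulVec_mulVec, ← Matrix.mul_assoc, Matrix.mul_inv_of_invertible,
      Matrix.one_mulVec]
  -- Claim A: joint CDF of U1 factorizes
  have claimA : ∀ a : Fin n → ℝ,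
      μ {ω | ∀ i, U1 ω i ≤ a i} = ∏ i, ENNReal.ofReal (Λ (a i)) := by
    intro a
    have h1 : {ω | ∀ i, U1 ω i ≤ a i} = ⋂ i, {ω | U1 ω i ≤ a i} := by
      ext ω; simp [Set.mem_iInter]
    rw [h1, hiid.meas_iInter (s := fun i => {ω | U1 ω i ≤ a i})
      (fun i => ⟨Set.Iic (a i), measurableSet_Iic, rfl⟩)]
    exact Finset.prod_congr rfl fun i _ => by
      rw [← hΛ i (a i), ENNReal.ofReal_toReal (measure_ne_top μ _)]
  have hEmeas : MeasurableSet E := by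
    rw [hE]
    have : {ω | ∀ i, U1 ω i ≤ (2 * y i - 1) * U2 ω i}
        = ⋂ i, {ω | U1 ω i ≤ (2 * y i - 1) * U2 ω i} := by
      ext ω; simp [Set.mem_iInter]
    rw [this]
    exact MeasurableSet.iInter fun i =>
      measurableSet_le hU1.eval (hU2.eval.const_mul _)
  -- Claim B: key disintegration identity
  have claimB : ∀ A : Set (Fin n → ℝ), MeasurableSet A →
      μ (E ∩ U2 ⁻¹' A) = ∫⁻ ω in U2 ⁻¹' A, F (U2 ω) ∂μ := by
    intro A hA
    have hmap : μ.map (fun ω => (U1 ω, U2 ω)) = (μ.map U1).prod (μ.map U2) :=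
      (indepFun_iff_map_prod_eq_prod_map_map hU1.aemeasurable hU2.aemeasurable).mp hindep
    set S : Set ((Fin n → ℝ) × (Fin n → ℝ)) :=
      {q | ∀ i, q.1 i ≤ (2 * y i - 1) * q.2 i} ∩ (Prod.snd ⁻¹' A) with hSdef
    have hSmeas : MeasurableSet S := by
      apply MeasurableSet.inter
      · have : {q : (Fin n → ℝ) × (Fin n → ℝ) | ∀ i, q.1 i ≤ (2 * y i - 1) * q.2 i}
            = ⋂ i, {q : (Fin n → ℝ) × (Fin n → ℝ) | q.1 i ≤ (2 * y i - 1) * q.2 i} := by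
          ext q; simp [Set.mem_iInter]
        rw [this]
        exact MeasurableSet.iInter fun i =>
          measurableSet_le measurable_fst.eval (measurable_snd.eval.const_mul _)
      · exact measurable_snd hA
    have hpre : E ∩ U2 ⁻¹' A = (fun ω => (U1 ω, U2 ω)) ⁻¹' S := by
      ext ω; simp [hE, hSdef]
    have hsec : ∀ v, (μ.map U1) ((fun u => (u, v)) ⁻¹' S) = A.indicator F v := by
      intro v
      by_cases hv : v ∈ A
      · have h2 : ((fun u : Fin n → ℝ => (u, v)) ⁻¹' S)
            = {u : Fin n → ℝ | ∀ i, u i ≤ (2 * y i - 1) * v i} := by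
          ext u; simp [hSdef, hv]
        have h3 : MeasurableSet {u : Fin n → ℝ | ∀ i, u i ≤ (2 * y i - 1) * v i} := by
          have : {u : Fin n → ℝ | ∀ i, u i ≤ (2 * y i - 1) * v i}
              = ⋂ i, {u : Fin n → ℝ | u i ≤ (2 * y i - 1) * v i} := by
            ext u; simp [Set.mem_iInter]
          rw [this]
          exact MeasurableSet.iInter fun i =>
            measurableSet_le (measurable_pi_apply i) measurable_const
        rw [h2, Measure.map_apply hU1 h3, Set.indicator_of_mem hv]
        exact claimA _
      · have h2 : ((fun u : Fin n → ℝ => (u, v)) ⁻¹' S) = ∅ := by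
          ext u; simp [hSdef, hv]
        rw [h2, measure_empty, Set.indicator_of_notMem hv]
    calc μ (E ∩ U2 ⁻¹' A)
        = (μ.map (fun ω => (U1 ω, U2 ω))) S := by
          rw [hpre, Measure.map_apply (hU1.prodMk hU2) hSmeas]
      _ = ∫⁻ v, (μ.map U1) ((fun u => (u, v)) ⁻¹' S) ∂(μ.map U2) := by
          rw [hmap, Measure.prod_apply_symm hSmeas]
      _ = ∫⁻ v, A.indicator F v ∂(μ.map U2) := lintegral_congr hsec
      _ = ∫⁻ v in A, F v ∂(μ.map U2) := lintegral_indicator hA F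
      _ = ∫⁻ ω in U2 ⁻¹' A, F (U2 ω) ∂μ := setLIntegral_map hA hFmeas hU2
  -- conclusion
  refine ⟨(μ E)⁻¹, ENNReal.inv_ne_zero.mpr (measure_ne_top μ E), ?_⟩
  ext S hS
  rw [Measure.map_apply hβmeas hS, cond_apply hEmeas, Measure.smul_apply, smul_eq_mul,
    withDensity_apply _ hS, setLIntegral_map hS hfmeas hβmeas]
  congr 1
  have hpreβ : β ⁻¹' S = U2 ⁻¹' ((fun v => (Xᵀ * (X * Xᵀ)⁻¹).mulVec v) ⁻¹' S) := by
    rw [hβ]; rfl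
  rw [hpreβ, claimB _ ((measurable_mulVec' _) hS), ← hpreβ]
  apply lintegral_congr
  intro ω
  rw [hfF, hid]
end

section
/- Let h be a real random variable with a density symmetric about 0, and k an independent random variable with CDF Λ where Λ is symmetric (Λ(−x) = 1 − Λ(x)). Define U = h if k ≤ s·h and U = −h otherwise, for a fixed sign s ∈ {−1, +1}. Then U is distributed as h conditioned on the event {k ≤ s·h}. -/
open MeasureTheory ProbabilityTheory Set

/-- accept/flip step. If `h` has a law symmetric about `0`, `k` is
independent of `h` with symmetric CDF `Λ`, `P(k = s·h) = 0`, and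
`U = h` if `k ≤ s·h`, `U = −h` otherwise, then `U` is distributed as
`h | (k ≤ s·h)`. -/
theorem stmt16
    {Ωs : Type*} [MeasurableSpace Ωs] (μ : Measure Ωs) [IsProbabilityMeasure μ]
    (h k : Ωs → ℝ) (hh : Measurable h) (hk : Measurable k)
    (hindep : IndepFun h k μ)
    (hsymm : μ.map h = μ.map (fun ω => -h ω))
    (Λ : ℝ → ℝ)
    (hΛ : ∀ x, (μ {ω | k ω ≤ x}).toReal = Λ x)
    (hΛsym : ∀ x, Λ (-x) = 1 - Λ x)
    (s : ℝ) (hs : s = 1 ∨ s = -1)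
    (hnull : μ {ω | k ω = s * h ω} = 0)
    (U : Ωs → ℝ)
    (hU : U = fun ω => if k ω ≤ s * h ω then h ω else -h ω) :
    μ.map U = (μ[|{ω | k ω ≤ s * h ω}]).map h := by
  set ν := μ.map h with hν
  set κ := μ.map k with hκ
  have hνprob : IsProbabilityMeasure ν := Measure.isProbabilityMeasure_map hh.aemeasurable
  have hκprob : IsProbabilityMeasure κ := Measure.isProbabilityMeasure_map hk.aemeasurable
  set A : Set Ωs := {ω | k ω ≤ s * h ω} with hAdef
  have hA : MeasurableSet A := measurableSet_le hk (hh.const_mul s)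
  have hmap : μ.map (fun ω => (h ω, k ω)) = ν.prod κ :=
    (indepFun_iff_map_prod_eq_prod_map_map hh.aemeasurable hk.aemeasurable).mp hindep
  have hpair : Measurable fun ω => (h ω, k ω) := hh.prodMk hk
  have hκIic : ∀ x, κ (Iic x) = μ {ω | k ω ≤ x} := by
    intro x
    rw [hκ, Measure.map_apply hk measurableSet_Iic]
    rfl
  have hκle : ∀ x, κ (Iic x) ≤ 1 := fun x => prob_le_one
  have hκfin : ∀ x, κ (Iic x) ≠ ⊤ := fun x => ne_top_of_le_ne_top ENNReal.one_ne_top (hκle x)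
  have hIoi : ∀ t, κ (Ioi t) = 1 - κ (Iic t) := by
    intro t
    rw [← compl_Iic, measure_compl measurableSet_Iic (hκfin t), measure_univ]
  have hκsym : ∀ t, κ (Iic (-t)) = 1 - κ (Iic t) := by
    intro t
    have h1 : (κ (Iic (-t))).toReal = (1 - κ (Iic t)).toReal := by
      rw [ENNReal.toReal_sub_of_le (hκle t) ENNReal.one_ne_top, hκIic, hκIic, hΛ, hΛ,
        hΛsym, ENNReal.toReal_one]
    exact (ENNReal.toReal_eq_toReal_iff' (hκfin _)
      (by simp [ENNReal.sub_ne_top ENNReal.one_ne_top])).mp h1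
  have hνneg : ∀ (g : ℝ → ENNReal), Measurable g →
      ∫⁻ x, g x ∂ν = ∫⁻ x, g (-x) ∂ν := by
    intro g hg
    calc ∫⁻ x, g x ∂ν = ∫⁻ x, g x ∂(μ.map fun ω => -h ω) := by rw [← hsymm]
    _ = ∫⁻ ω, g (-h ω) ∂μ := lintegral_map hg hh.neg
    _ = ∫⁻ x, g (-x) ∂(μ.map h) := (lintegral_map (hg.comp measurable_neg) hh).symm
  have hmeasκ : Measurable fun x : ℝ => κ (Iic (s * x)) := by
    have : (fun x : ℝ => κ (Iic (s * x))) =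
        (fun x : ℝ => κ (Prod.mk x ⁻¹' {p : ℝ × ℝ | p.2 ≤ s * p.1})) := by
      ext x; rfl
    rw [this]
    exact measurable_measure_prodMk_left
      (measurableSet_le measurable_snd (measurable_fst.const_mul s))
  -- key identity
  have key : ∀ B : Set ℝ, MeasurableSet B →
      μ (Aᶜ ∩ (fun ω => -h ω) ⁻¹' B) = μ (A ∩ h ⁻¹' B) := by
    intro B hB
    have hS1 : MeasurableSet {p : ℝ × ℝ | p.2 ≤ s * p.1 ∧ p.1 ∈ B} := by
      apply MeasurableSet.inter
      · exact measurableSet_le measurable_snd (measurable_fst.const_mul s)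
      · exact measurable_fst hB
    have hS2 : MeasurableSet {p : ℝ × ℝ | ¬ p.2 ≤ s * p.1 ∧ -p.1 ∈ B} := by
      apply MeasurableSet.inter
      · exact (measurableSet_le measurable_snd (measurable_fst.const_mul s)).compl
      · exact measurable_fst.neg hB
    have hRHS : μ (A ∩ h ⁻¹' B) = ∫⁻ x, B.indicator (fun x => κ (Iic (s * x))) x ∂ν := by
      have he : A ∩ h ⁻¹' B = (fun ω => (h ω, k ω)) ⁻¹' {p : ℝ × ℝ | p.2 ≤ s * p.1 ∧ p.1 ∈ B} := by
        ext ω; simp [hAdef, and_comm]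
      rw [he, ← Measure.map_apply hpair hS1, hmap, Measure.prod_apply hS1]
      congr 1
      ext x
      by_cases hx : x ∈ B
      · have he2 : Prod.mk x ⁻¹' {p : ℝ × ℝ | p.2 ≤ s * p.1 ∧ p.1 ∈ B} = Iic (s * x) := by
          ext y; simp [hx]
        simp [he2, indicator_of_mem hx]
      · have he2 : Prod.mk x ⁻¹' {p : ℝ × ℝ | p.2 ≤ s * p.1 ∧ p.1 ∈ B} = ∅ := by
          ext y; simp [hx]
        simp [he2, indicator_of_notMem hx]
    have hLHS : μ (Aᶜ ∩ (fun ω => -h ω) ⁻¹' B) =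
        ∫⁻ x, ((fun x : ℝ => -x) ⁻¹' B).indicator (fun x => 1 - κ (Iic (s * x))) x ∂ν := by
      have he : Aᶜ ∩ (fun ω => -h ω) ⁻¹' B =
          (fun ω => (h ω, k ω)) ⁻¹' {p : ℝ × ℝ | ¬ p.2 ≤ s * p.1 ∧ -p.1 ∈ B} := by
        ext ω; simp [hAdef]
      rw [he, ← Measure.map_apply hpair hS2, hmap, Measure.prod_apply hS2]
      congr 1
      ext x
      by_cases hx : -x ∈ B
      · have he2 : Prod.mk x ⁻¹' {p : ℝ × ℝ | ¬ p.2 ≤ s * p.1 ∧ -p.1 ∈ B} = Ioi (s * x) := by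
          ext y; simp [hx, not_le]
        rw [he2, indicator_of_mem (by simpa using hx), hIoi]
      · have he2 : Prod.mk x ⁻¹' {p : ℝ × ℝ | ¬ p.2 ≤ s * p.1 ∧ -p.1 ∈ B} = ∅ := by
          ext y; simp [hx]
        rw [he2, indicator_of_notMem (by simpa using hx)]
        simp
    rw [hLHS, hRHS]
    have hmeas : Measurable fun x : ℝ => ((fun x : ℝ => -x) ⁻¹' B).indicator
        (fun x => 1 - κ (Iic (s * x))) x :=
      (Measurable.indicator (measurable_const.sub hmeasκ) (measurable_neg hB))
    rw [hνneg _ hmeas]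
    congr 1
    ext x
    by_cases hx : x ∈ B
    · rw [indicator_of_mem (by simpa using hx), indicator_of_mem hx]
      have : s * -x = -(s * x) := by ring
      rw [this, hκsym, ENNReal.sub_sub_cancel ENNReal.one_ne_top (hκle _)]
    · rw [indicator_of_notMem (by simpa using hx), indicator_of_notMem hx]
  -- μ A = 1/2
  have hAc : μ Aᶜ = μ A := by
    have := key univ MeasurableSet.univ
    simpa using this
  have hhalf : μ A = 1 / 2 := by
    have htot : μ A + μ Aᶜ = 1 := by rw [measure_add_measure_compl hA, measure_univ]
    rw [hAc] at htot
    have h2 : 2 * μ A = 1 := by rw [two_mul]; exact htot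
    rw [ENNReal.eq_div_iff (by norm_num) (by norm_num)]
    exact h2
  have hAne : μ A ≠ 0 := by rw [hhalf]; norm_num
  -- conclude
  have hUmeas : Measurable U := by
    rw [hU]; exact Measurable.ite hA hh hh.neg
  ext B hB
  rw [Measure.map_apply hUmeas hB, Measure.map_apply hh hB, cond_apply hA]
  have hsplit : U ⁻¹' B = (A ∩ h ⁻¹' B) ∪ (Aᶜ ∩ (fun ω => -h ω) ⁻¹' B) := by
    ext ω
    simp only [hU, mem_preimage, mem_union, mem_inter_iff, mem_compl_iff, hAdef,
      Set.mem_setOf_eq]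
    by_cases hω : k ω ≤ s * h ω
    · simp [hω]
    · simp [hω]
  rw [hsplit, measure_union (s₂ := Aᶜ ∩ (fun ω => -h ω) ⁻¹' B) _ (hA.compl.inter (hh.neg hB)), key B hB, hhalf]
  · rw [← two_mul]
    rw [ENNReal.inv_div (by norm_num) (by norm_num)]
    norm_num
  · exact (disjoint_compl_right.mono (inter_subset_left) (inter_subset_left))
end
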